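/- Let G be a weakly closed finite simple graph. Then G contains no induced cycle of length 5 or more: for every k ≥ 5 there is no graph embedding (injective map preserving both adjacency and non-adjacency) of the cycle graph C_k into G. -/

import Mathlib

/-- `G` is weakly closed: some labeling of the vertices by `1, …, n` is such that for
every edge `{i, j}` with `i < j` and every `i < k < j`, `{i,k} ∈ E(G)` or `{k,j} ∈ E(G)`. -/
def WeaklyClosed {V : Type*} [Fintype V] (G : SimpleGraph V) : Prop :=
  ∃ σ : V ≃ Fin (Fintype.card V), ∀ i j k : V,
    G.Adj i j → σ i < σ k → σ k < σ j → G.Adj i k ∨ G.Adj k j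

open Fin.CommRing

section Aux

variable {m : ℕ} [NeZero m]

lemma aux_neg_cast (k : ℕ) (hk : k ≤ m) : (-((k : ℕ) : Fin m)) = ((m - k : ℕ) : Fin m) := by
  rw [neg_eq_iff_add_eq_zero]
  have h : ((m - k : ℕ) : Fin m) + ((k : ℕ) : Fin m) = ((m - k + k : ℕ) : Fin m) := by
    push_cast; ring
  rw [add_comm, h, Nat.sub_add_cancel hk, Fin.natCast_self]

lemma aux_adj (hm : 5 ≤ m) (t : Fin m) (k : ℕ) (hk : k < m) :
    (SimpleGraph.cycleGraph m).Adj t (t + ((k : ℕ) : Fin m)) ↔ (k = 1 ∨ k = m - 1) := by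
  rw [SimpleGraph.cycleGraph_adj']
  have h1 : t - (t + ((k : ℕ) : Fin m)) = -((k : ℕ) : Fin m) := by ring
  have h2 : (t + ((k : ℕ) : Fin m)) - t = ((k : ℕ) : Fin m) := by ring
  rw [h1, h2, aux_neg_cast k hk.le, Fin.val_natCast, Fin.val_natCast]
  rcases Nat.eq_zero_or_pos k with h | h
  · subst h; simp [Nat.mod_self]; omega
  · rw [Nat.mod_eq_of_lt hk, Nat.mod_eq_of_lt (by omega)]; omega

lemma aux_adj2 (hm : 5 ≤ m) (t : Fin m) (k k' : ℕ) (hkk : k ≤ k') (hk' : k' < m) :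
    (SimpleGraph.cycleGraph m).Adj (t + ((k : ℕ) : Fin m)) (t + ((k' : ℕ) : Fin m)) ↔
      (k' - k = 1 ∨ k' - k = m - 1) := by
  have h : ((k' : ℕ) : Fin m) = ((k : ℕ) : Fin m) + ((k' - k : ℕ) : Fin m) := by
    rw [← Nat.cast_add]; congr 1; omega
  rw [h, ← add_assoc]
  exact aux_adj hm _ (k' - k) (by omega)

lemma aux_ne2 (hm : 5 ≤ m) (t : Fin m) (k k' : ℕ) (hkk : k < k') (hk' : k' < m) :
    t + ((k : ℕ) : Fin m) ≠ t + ((k' : ℕ) : Fin m) := by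
  intro hEq
  have h : ((k : ℕ) : Fin m) = ((k' : ℕ) : Fin m) := by
    have := congrArg (fun x => x - t) hEq
    simpa [add_comm, add_sub_cancel_right] using this
  have h2 := congrArg Fin.val h
  rw [Fin.val_natCast, Fin.val_natCast, Nat.mod_eq_of_lt (by omega), Nat.mod_eq_of_lt hk'] at h2
  omega

/-- Core argument: if `t` has minimal label among the cycle image and the label of
`φ (t+1)` is smaller than that of `φ (t+(m-1)) = φ (t-1)`, we get a contradiction. -/
lemma core {V : Type*} [Fintype V] {G : SimpleGraph V}
    (σ : V ≃ Fin (Fintype.card V))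
    (hw : ∀ i j k : V, G.Adj i j → σ i < σ k → σ k < σ j → G.Adj i k ∨ G.Adj k j)
    (hm : 5 ≤ m) (φ : SimpleGraph.cycleGraph m ↪g G) (t : Fin m)
    (hmin : ∀ x : Fin m, σ (φ t) ≤ σ (φ x))
    (hab : σ (φ (t + ((1 : ℕ) : Fin m))) < σ (φ (t + ((m - 1 : ℕ) : Fin m)))) : False := by
  set v := φ t with hv
  set a := φ (t + ((1 : ℕ) : Fin m)) with ha
  set b := φ (t + ((m - 1 : ℕ) : Fin m)) with hb
  set c := φ (t + ((2 : ℕ) : Fin m)) with hc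
  -- adjacency/non-adjacency facts
  have hvb : G.Adj v b :=
    φ.map_rel_iff.mpr ((aux_adj hm t (m - 1) (by omega)).mpr (by omega))
  have hac : G.Adj a c :=
    φ.map_rel_iff.mpr ((aux_adj2 hm t 1 2 (by omega) (by omega)).mpr (by omega))
  have hvc : ¬ G.Adj v c := fun hAdj => by
    have := (aux_adj hm t 2 (by omega)).mp (φ.map_rel_iff.mp hAdj); omega
  have hab' : ¬ G.Adj a b := fun hAdj => by
    have := (aux_adj2 hm t 1 (m - 1) (by omega) (by omega)).mp (φ.map_rel_iff.mp hAdj); omega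
  have hcb' : ¬ G.Adj c b := fun hAdj => by
    have := (aux_adj2 hm t 2 (m - 1) (by omega) (by omega)).mp (φ.map_rel_iff.mp hAdj); omega
  -- label facts
  have hvc' : σ v < σ c := by
    refine lt_of_le_of_ne (hmin _) ?_
    intro hEq
    exact aux_ne2 hm t 0 2 (by omega) (by omega)
      (by simpa using φ.injective (σ.injective hEq))
  have hcb2 : σ b < σ c := by
    rcases lt_trichotomy (σ c) (σ b) with hlt | heq | hgt
    · exact False.elim (Or.elim (hw v b c hvb hvc' hlt) hvc hcb')
    · exact False.elim (aux_ne2 hm t 2 (m - 1) (by omega) (by omega)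
        (φ.injective (σ.injective heq)))
    · exact hgt
  exact Or.elim (hw a c b hac hab hcb2) hab' (fun h2 => hcb' h2.symm)

/-- Reflection `x ↦ t + t - x` as a graph automorphism of the cycle. -/
def reflEmb (hm : 5 ≤ m) (t : Fin m) : SimpleGraph.cycleGraph m ↪g SimpleGraph.cycleGraph m where
  toFun := fun x => t + t - x
  inj' := fun x y hxy => by
    have := congrArg (fun z => t + t - z) hxy
    simpa using this
  map_rel_iff' := by
    intro x y
    show (SimpleGraph.cycleGraph m).Adj (t + t - x) (t + t - y) ↔ (SimpleGraph.cycleGraph m).Adj x y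
    rw [SimpleGraph.cycleGraph_adj', SimpleGraph.cycleGraph_adj']
    have h1 : (t + t - x) - (t + t - y) = y - x := by ring
    have h2 : (t + t - y) - (t + t - x) = x - y := by ring
    rw [h1, h2]
    exact or_comm

end Aux

/-- A weakly closed graph contains no induced cycle of length 5 or more. -/
theorem no_induced_long_cycle_of_weaklyClosed {V : Type*} [Fintype V] (G : SimpleGraph V)
    (h : WeaklyClosed G) (m : ℕ) (hm : 5 ≤ m) :
    IsEmpty (SimpleGraph.cycleGraph m ↪g G) := by
  haveI : NeZero m := ⟨by omega⟩
  constructor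
  intro φ
  obtain ⟨σ, hw⟩ := h
  obtain ⟨t, -, hmin⟩ := Finset.exists_min_image Finset.univ (fun x => σ (φ x))
    ⟨⟨0, by omega⟩, Finset.mem_univ _⟩
  have hminall : ∀ x : Fin m, σ (φ t) ≤ σ (φ x) := fun x => hmin x (Finset.mem_univ x)
  have hne : σ (φ (t + ((1 : ℕ) : Fin m))) ≠ σ (φ (t + ((m - 1 : ℕ) : Fin m))) := by
    intro hEq
    exact aux_ne2 hm t 1 (m - 1) (by omega) (by omega) (φ.injective (σ.injective hEq))
  rcases lt_or_gt_of_ne hne with hlt | hgt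
  · exact core σ hw hm φ t hminall hlt
  · -- use the reflected embedding
    set ψ := φ.comp (reflEmb hm t) with hψ
    have hψt : ψ t = φ t := by
      rw [hψ]; show φ (t + t - t) = φ t; rw [add_sub_cancel_right]
    have key1 : ((m - 1 : ℕ) : Fin m) = -((1 : ℕ) : Fin m) := (aux_neg_cast 1 (by omega)).symm
    have key2 : -(((m - 1 : ℕ)) : Fin m) = ((1 : ℕ) : Fin m) := by
      rw [aux_neg_cast (m - 1) (by omega)]; congr 1; omega
    have hr1 : (reflEmb hm t) (t + ((1 : ℕ) : Fin m)) = t + ((m - 1 : ℕ) : Fin m) := by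
      show t + t - (t + ((1 : ℕ) : Fin m)) = t + ((m - 1 : ℕ) : Fin m)
      rw [key1]; ring
    have hr2 : (reflEmb hm t) (t + ((m - 1 : ℕ) : Fin m)) = t + ((1 : ℕ) : Fin m) := by
      show t + t - (t + ((m - 1 : ℕ) : Fin m)) = t + ((1 : ℕ) : Fin m)
      rw [← key2]; ring
    have hψ1 : ψ (t + ((1 : ℕ) : Fin m)) = φ (t + ((m - 1 : ℕ) : Fin m)) := by
      rw [hψ]; exact congrArg φ hr1
    have hψm1 : ψ (t + ((m - 1 : ℕ) : Fin m)) = φ (t + ((1 : ℕ) : Fin m)) := by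
      rw [hψ]; exact congrArg φ hr2
    refine core σ hw hm ψ t ?_ ?_
    · intro x
      rw [hψt]
      exact hminall _
    · rw [hψ1, hψm1]
      exact hgt
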